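/- Let $W$ be a finite set, $V \subseteq W$, and let $\mathcal{I}$ be a collection of $n$ subsets of $W$, each of size at least $n$, such that $h(\mathcal{I}, V) = n$. Let $(V_1, V_2)$ be a partition of $V$ with $h(\mathcal{I}, V_i) = m_i$ for $i = 1, 2$. Then $m_1 + m_2 \ge n$, and for each $\ell \le m_1 + m_2 - n$ there exists a partition $(\mathcal{I}_1, \mathcal{I}_2)$ of $\mathcal{I}$ such that $h(\mathcal{I}_1, V_1) = m_1 - \ell$ and $h(\mathcal{I}_2, V_2) = n - m_1 + \ell$. -/

import Mathlib

open Finset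

/-- A set of vertices is independent: no two of its members are adjacent. -/
def IsIndep {V : Type*} (G : SimpleGraph V) (S : Set V) : Prop :=
  ∀ a ∈ S, ∀ b ∈ S, ¬ G.Adj a b

/-- `(F, G)` admits a rainbow independent `m`-set: `m` distinct vertices chosen
from `m` distinct members of `F` (one vertex per member) forming an independent set. -/
def RainbowIndep {V : Type*} [DecidableEq V] (G : SimpleGraph V) {k : ℕ}
    (F : Fin k → Finset V) (m : ℕ) : Prop :=
  ∃ (s : Finset (Fin k)) (x : Fin k → V),
    s.card = m ∧ (∀ i ∈ s, x i ∈ F i) ∧ (s.image x).card = m ∧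
    IsIndep G (s.image x : Set V)

/-- The cycle `C_t` with vertex set `ZMod t`, consecutive residues adjacent. -/
def cyc (t : ℕ) : SimpleGraph (ZMod t) :=
  SimpleGraph.fromRel (fun a b => b = a + 1)

/-- `h(𝓘|_s, S)`: the largest `m` such that at least `m` of the sets `I i`, `i ∈ s`,
meet `S` in at least `m` elements. -/
noncomputable def hFun {α : Type*} [DecidableEq α] {k : ℕ} (I : Fin k → Finset α)
    (s : Finset (Fin k)) (S : Finset α) : ℕ :=
  sSup {m : ℕ | m ≤ (s.filter (fun i => m ≤ ((I i) ∩ S).card)).card}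

lemma hFun_spec {α : Type*} [DecidableEq α] {k : ℕ} (I : Fin k → Finset α)
    (s : Finset (Fin k)) (S : Finset α) :
    hFun I s S ≤ (s.filter (fun i => hFun I s S ≤ ((I i) ∩ S).card)).card := by
  have hb : BddAbove {m : ℕ | m ≤ (s.filter (fun i => m ≤ ((I i) ∩ S).card)).card} :=
    ⟨s.card, fun m hm => hm.trans (Finset.card_filter_le _ _)⟩
  exact Nat.sSup_mem ⟨0, by simp⟩ hb

lemma le_hFun {α : Type*} [DecidableEq α] {k : ℕ} (I : Fin k → Finset α)
    (s : Finset (Fin k)) (S : Finset α) {m : ℕ}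
    (hm : m ≤ (s.filter (fun i => m ≤ ((I i) ∩ S).card)).card) :
    m ≤ hFun I s S := by
  have hb : BddAbove {m : ℕ | m ≤ (s.filter (fun i => m ≤ ((I i) ∩ S).card)).card} :=
    ⟨s.card, fun m hm => hm.trans (Finset.card_filter_le _ _)⟩
  exact le_csSup hb hm

lemma hFun_le_card {α : Type*} [DecidableEq α] {k : ℕ} (I : Fin k → Finset α)
    (s : Finset (Fin k)) (S : Finset α) : hFun I s S ≤ s.card :=
  (hFun_spec I s S).trans (Finset.card_filter_le _ _)
/-- Lemma: if `h(𝓘,V) = n` and `(V₁,V₂)` partitions `V` with `h(𝓘,Vᵢ) = mᵢ`,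
then `m₁ + m₂ ≥ n` and for each `ℓ ≤ m₁ + m₂ - n` there is a partition
`(𝓘₁,𝓘₂)` of `𝓘` with `h(𝓘₁,V₁) = m₁ - ℓ` and `h(𝓘₂,V₂) = n - m₁ + ℓ`. -/
theorem stmt6 {α : Type*} [DecidableEq α] (n : ℕ) (W V : Finset α) (hVW : V ⊆ W)
    (I : Fin n → Finset α) (hIW : ∀ i, I i ⊆ W) (hIcard : ∀ i, n ≤ (I i).card)
    (hV : hFun I Finset.univ V = n)
    (V₁ V₂ : Finset α) (hpart : V₁ ∪ V₂ = V) (hdisj : Disjoint V₁ V₂)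
    (m₁ m₂ : ℕ) (hm₁ : hFun I Finset.univ V₁ = m₁) (hm₂ : hFun I Finset.univ V₂ = m₂) :
    n ≤ m₁ + m₂ ∧
    ∀ ℓ : ℕ, ℓ + n ≤ m₁ + m₂ →
      ∃ s : Finset (Fin n),
        hFun I s V₁ = m₁ - ℓ ∧ hFun I sᶜ V₂ = n - m₁ + ℓ := by
  -- every I i meets V in ≥ n elements
  have hsplit : ∀ i, ((I i) ∩ V₁).card + ((I i) ∩ V₂).card = ((I i) ∩ V).card := by
    intro i
    rw [← hpart, Finset.inter_union_distrib_left]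
    exact (Finset.card_union_of_disjoint
      (hdisj.mono Finset.inter_subset_right Finset.inter_subset_right)).symm
  have hall : ∀ i, n ≤ ((I i) ∩ V).card := by
    have h := hFun_spec I (Finset.univ : Finset (Fin n)) V
    rw [hV] at h
    have hcard : (Finset.univ : Finset (Fin n)).card = n := by simp
    have heq := Finset.eq_of_subset_of_card_le (Finset.filter_subset _ _)
      (by rw [hcard]; exact h)
    intro i
    have : i ∈ Finset.univ.filter (fun i => n ≤ ((I i) ∩ V).card) := by
      rw [heq]; exact Finset.mem_univ i
    exact (Finset.mem_filter.mp this).2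
  have hm₁le : m₁ ≤ n := by
    have := hFun_le_card I (Finset.univ : Finset (Fin n)) V₁; rw [hm₁] at this; simpa using this
  have hm₂le : m₂ ≤ n := by
    have := hFun_le_card I (Finset.univ : Finset (Fin n)) V₂; rw [hm₂] at this; simpa using this
  have hc₁ : m₁ ≤ (Finset.univ.filter (fun i => m₁ ≤ ((I i) ∩ V₁).card)).card := by
    have := hFun_spec I (Finset.univ : Finset (Fin n)) V₁; rwa [hm₁] at this
  have hc₂ : m₂ ≤ (Finset.univ.filter (fun i => m₂ ≤ ((I i) ∩ V₂).card)).card := by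
    have := hFun_spec I (Finset.univ : Finset (Fin n)) V₂; rwa [hm₂] at this
  have hnot₁ : (Finset.univ.filter (fun i => m₁ + 1 ≤ ((I i) ∩ V₁).card)).card ≤ m₁ := by
    by_contra h
    have := le_hFun I (Finset.univ : Finset (Fin n)) V₁ (m := m₁ + 1) (by omega)
    omega
  have hnot₂ : (Finset.univ.filter (fun i => m₂ + 1 ≤ ((I i) ∩ V₂).card)).card ≤ m₂ := by
    by_contra h
    have := le_hFun I (Finset.univ : Finset (Fin n)) V₂ (m := m₂ + 1) (by omega)
    omega
  have hmain : n ≤ m₁ + m₂ := by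
    by_contra h
    have hcover : (Finset.univ : Finset (Fin n)) ⊆
        (Finset.univ.filter (fun i => m₁ + 1 ≤ ((I i) ∩ V₁).card)) ∪
        (Finset.univ.filter (fun i => m₂ + 1 ≤ ((I i) ∩ V₂).card)) := by
      intro i _
      have h1 := hall i
      have h2 := hsplit i
      simp only [Finset.mem_union, Finset.mem_filter, Finset.mem_univ, true_and]
      omega
    have := (Finset.card_le_card hcover).trans (Finset.card_union_le _ _)
    simp only [Finset.card_univ, Fintype.card_fin] at this
    omega
  refine ⟨hmain, ?_⟩
  intro ℓ hℓ
  have hℓm₁ : ℓ ≤ m₁ := by omega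
  set a := m₁ - ℓ with ha
  set b := n - m₁ + ℓ with hb
  have hab : a + b = n := by omega
  have hbm₂ : b ≤ m₂ := by omega
  set good₁ := Finset.univ.filter (fun i => a ≤ ((I i) ∩ V₁).card) with hg₁
  set good₂ := Finset.univ.filter (fun i => b ≤ ((I i) ∩ V₂).card) with hg₂
  set bad := Finset.univ.filter (fun i => ¬ b ≤ ((I i) ∩ V₂).card) with hbad
  have hga : a ≤ good₁.card := by
    refine le_trans (le_trans (by omega) hc₁) (Finset.card_le_card ?_)
    exact Finset.monotone_filter_right _ (fun i hi => by omega)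
  have hgb : b ≤ good₂.card := by
    refine le_trans (le_trans hbm₂ hc₂) (Finset.card_le_card ?_)
    exact Finset.monotone_filter_right _ (fun i hi => by omega)
  have hbadcard : bad.card ≤ a := by
    have := Finset.card_filter_add_card_filter_not
      (s := (Finset.univ : Finset (Fin n))) (p := fun i => b ≤ ((I i) ∩ V₂).card)
    simp only [Finset.card_univ, Fintype.card_fin] at this
    rw [hg₂] at hgb
    rw [hbad]
    omega
  have hbadsub : bad ⊆ good₁ := by
    intro i hi
    rw [hbad, Finset.mem_filter] at hi
    rw [hg₁, Finset.mem_filter]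
    have h1 := hall i
    have h2 := hsplit i
    exact ⟨Finset.mem_univ i, by omega⟩
  obtain ⟨u, hbu, hug, hucard⟩ := Finset.exists_subsuperset_card_eq (n := a - bad.card + bad.card)
    hbadsub (by omega) (by omega)
  have hucard' : u.card = a := by omega
  refine ⟨u, ?_, ?_⟩
  · refine le_antisymm (by rw [← hucard']; exact hFun_le_card I u V₁) ?_
    refine le_hFun I u V₁ ?_
    have : u.filter (fun i => a ≤ ((I i) ∩ V₁).card) = u := by
      apply Finset.filter_true_of_mem
      intro i hi
      have := hug hi
      rw [hg₁, Finset.mem_filter] at this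
      exact this.2
    rw [this, hucard']
  · have hcc : uᶜ.card = b := by
      rw [Finset.card_compl, Fintype.card_fin, hucard']; omega
    refine le_antisymm (by rw [← hcc]; exact hFun_le_card I uᶜ V₂) ?_
    refine le_hFun I uᶜ V₂ ?_
    have : uᶜ.filter (fun i => b ≤ ((I i) ∩ V₂).card) = uᶜ := by
      apply Finset.filter_true_of_mem
      intro i hi
      by_contra hcon
      have : i ∈ bad := by rw [hbad, Finset.mem_filter]; exact ⟨Finset.mem_univ i, hcon⟩
      exact (Finset.mem_compl.mp hi) (hbu this)
    rw [this, hcc]
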